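/- arXiv:2501.05361 — 8 statements merged into one kernel-verified Lean document; each statement's English description precedes it below -/
import Mathlib

section
/- Let f and f₀ be functions on a set X with f* = sup_{x∈X} f₀(x) attained, and suppose f is a ρ-gap-adjusted misspecified approximation of f₀, i.e., |f(x) - f₀(x)| ≤ ρ(f* - f₀(x)) for all x ∈ X with 0 ≤ ρ < 1. Then the set of maximizers of f equals the set of maximizers of f₀. -/
theorem gam_preserves_maximizers {X : Type*} [TopologicalSpace X] [CompactSpace X]
    [Nonempty X] (f f₀ : X → ℝ) (hf : Continuous f) (hf₀ : Continuous f₀)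
    (fstar : ℝ) (hmax : ∃ x, f₀ x = fstar ∧ ∀ y, f₀ y ≤ fstar)
    (ρ : ℝ) (hρ0 : 0 ≤ ρ) (hρ1 : ρ < 1)
    (hgam : ∀ x, |f x - f₀ x| ≤ ρ * (fstar - f₀ x)) :
    {x | ∀ y, f y ≤ f x} = {x | ∀ y, f₀ y ≤ f₀ x} := by
  obtain ⟨x₀, hx₀, hub⟩ := hmax
  -- if f₀ z = fstar then f z = fstar
  have hfeq : ∀ z, f₀ z = fstar → f z = fstar := by
    intro z hz
    have := hgam z
    rw [hz] at this
    simp at this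
    linarith
  -- f y ≤ fstar for all y
  have hfle : ∀ y, f y ≤ fstar := by
    intro y
    have h := hgam y
    have h2 := abs_le.mp h
    have h3 := hub y
    nlinarith [h2.2]
  ext x
  simp only [Set.mem_setOf_eq]
  constructor
  · intro hx y
    have hx0 : f x₀ = fstar := hfeq x₀ hx₀
    have : fstar ≤ f x := hx0 ▸ hx x₀
    have hxf : f x = fstar := le_antisymm (hfle x) this
    -- show f₀ x = fstar
    have h := hgam x
    have h2 := (abs_le.mp h).2
    rw [hxf] at h2
    have : fstar ≤ f₀ x := by nlinarith
    have : f₀ x = fstar := le_antisymm (hub x) this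
    rw [this]; exact hub y
  · intro hx y
    have hxs : f₀ x = fstar := le_antisymm (hub x) (hx₀ ▸ hx x₀)
    rw [hfeq x hxs]
    exact hfle y
end

section
/- Let f be a ρ-gap-adjusted misspecified approximation of f₀ on a compact set X with 0 ≤ ρ < 1, i.e., |f(x) - f₀(x)| ≤ ρ(f* - f₀(x)) for all x, where f* = max_x f₀(x). Then max_{x∈X} f(x) = f*. -/
theorem gam_preserves_max_value {X : Type*} [TopologicalSpace X] [CompactSpace X]
    [Nonempty X] (f f₀ : X → ℝ) (hf : Continuous f) (hf₀ : Continuous f₀)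
    (fstar : ℝ) (hmax : ∃ x, f₀ x = fstar ∧ ∀ y, f₀ y ≤ fstar)
    (ρ : ℝ) (hρ0 : 0 ≤ ρ) (hρ1 : ρ < 1)
    (hgam : ∀ x, |f x - f₀ x| ≤ ρ * (fstar - f₀ x)) :
    ∃ x, f x = fstar ∧ ∀ y, f y ≤ fstar := by
  obtain ⟨x, hx, hub⟩ := hmax
  refine ⟨x, ?_, ?_⟩
  · have h := hgam x
    rw [hx] at h
    simp only [sub_self, mul_zero] at h
    have := abs_nonneg (f x - fstar)
    have : f x - fstar = 0 := by
      have := abs_eq_zero.mp (le_antisymm h (abs_nonneg _))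
      exact this
    linarith
  · intro y
    have h := hgam y
    have h2 : f y - f₀ y ≤ ρ * (fstar - f₀ y) := (abs_le.mp h).2
    have h3 : f₀ y ≤ fstar := hub y
    nlinarith
end

section
/- Let x₀,…,x_{t-1} ∈ ℝ^d and Σ_t = λI + Σ_{i=0}^{t-1} x_i x_iᵀ with λ > 0. Then Σ_{i=0}^{t-1} x_iᵀ Σ_t^{-1} x_i ≤ d. -/
open Matrix

lemma posdef_trace_pos {n : ℕ} {M : Matrix (Fin n) (Fin n) ℝ} (hM : M.PosDef) :
    0 ≤ M.trace := by
  rw [Matrix.trace]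
  apply Finset.sum_nonneg
  intro i _
  have := hM.dotProduct_mulVec_pos (x := Pi.single i 1) (fun h => by simpa using congrFun h i)
  simpa [dotProduct, Matrix.mulVec, Pi.single_apply, Finset.mul_sum,
    Matrix.diag] using this.le

lemma trace_mul_vecMulVec {n : ℕ} (A : Matrix (Fin n) (Fin n) ℝ) (x : Fin n → ℝ) :
    (A * vecMulVec x x).trace = x ⬝ᵥ (A *ᵥ x) := by
  simp only [Matrix.trace, Matrix.diag, Matrix.mul_apply, vecMulVec_apply,
    dotProduct, Matrix.mulVec, dotProduct]
  congr 1; ext j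
  rw [Finset.mul_sum]
  congr 1; ext i
  ring

theorem sum_quadratic_inv_le_dim {d t : ℕ} (hd : 1 ≤ d) (lam : ℝ) (hlam : 0 < lam)
    (x : ℕ → Fin d → ℝ) (St : Matrix (Fin d) (Fin d) ℝ)
    (hS : St = lam • (1 : Matrix (Fin d) (Fin d) ℝ) +
      ∑ i ∈ Finset.range t, vecMulVec (x i) (x i))
    (hpos : St.PosDef) :
    ∑ i ∈ Finset.range t, x i ⬝ᵥ (St⁻¹ *ᵥ x i) ≤ (d : ℝ) := by
  have hinv : St⁻¹ * St = 1 := Matrix.nonsing_inv_mul St hpos.det_pos.ne'.isUnit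
  have key : ∑ i ∈ Finset.range t, x i ⬝ᵥ (St⁻¹ *ᵥ x i)
      = (d : ℝ) - lam * St⁻¹.trace := by
    have : ∑ i ∈ Finset.range t, x i ⬝ᵥ (St⁻¹ *ᵥ x i)
        = (St⁻¹ * (∑ i ∈ Finset.range t, vecMulVec (x i) (x i))).trace := by
      rw [Finset.mul_sum, Matrix.trace_sum]
      exact (Finset.sum_congr rfl fun i _ => (trace_mul_vecMulVec _ _).symm)
    rw [this]
    have hsum : (∑ i ∈ Finset.range t, vecMulVec (x i) (x i))
        = St - lam • (1 : Matrix (Fin d) (Fin d) ℝ) := by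
      rw [hS]; abel
    rw [hsum, Matrix.mul_sub, Matrix.trace_sub, hinv, Matrix.trace_one,
      Matrix.mul_smul, Matrix.mul_one, Matrix.trace_smul]
    simp
  rw [key]
  have := posdef_trace_pos hpos.inv
  nlinarith
end

section
/- (Potential function bound) Let x₀,…,x_{T-1} ∈ ℝ^d with ‖x_t‖₂ ≤ C_b for all t, and λ > 0. Then log det(I + (1/λ) Σ_{t=0}^{T-1} x_t x_tᵀ) ≤ d · log(1 + T C_b² / (d λ)). -/
open Matrix Finset

theorem potential_function_bound {d T : ℕ} (hd : 0 < d) (lam C_b : ℝ)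
    (hlam : 0 < lam) (hCb : 0 < C_b) (x : ℕ → Fin d → ℝ)
    (hx : ∀ t, t < T → ‖(WithLp.equiv 2 (Fin d → ℝ)).symm (x t)‖ ≤ C_b) :
    Real.log ((1 + (1 / lam) • ∑ t ∈ Finset.range T,
        vecMulVec (x t) (x t) : Matrix (Fin d) (Fin d) ℝ).det) ≤
      (d : ℝ) * Real.log (1 + T * C_b ^ 2 / (d * lam)) := by
  have hd' : (0:ℝ) < d := by exact_mod_cast hd
  set S : Matrix (Fin d) (Fin d) ℝ :=
    (1 / lam) • ∑ t ∈ Finset.range T, vecMulVec (x t) (x t) with hS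
  set M : Matrix (Fin d) (Fin d) ℝ := 1 + S with hMdef
  -- S is PSD
  set B : Matrix (Fin T) (Fin d) ℝ :=
    Matrix.of (fun t i => Real.sqrt (1/lam) * x t i) with hB
  have hSB : S = Bᴴ * B := by
    ext i j
    simp only [hS, Matrix.smul_apply, Matrix.sum_apply, vecMulVec_apply, Matrix.mul_apply,
      Matrix.conjTranspose_apply, hB, Matrix.of_apply, star_trivial, smul_eq_mul]
    rw [← Fin.sum_univ_eq_sum_range (fun t => x t i * x t j) T, Finset.mul_sum]
    refine Finset.sum_congr rfl fun t _ => ?_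
    rw [mul_mul_mul_comm, Real.mul_self_sqrt (by positivity)]
  have hSpsd : S.PosSemidef := hSB ▸ Matrix.posSemidef_conjTranspose_mul_self B
  have hM : M.PosDef := Matrix.PosDef.one.add_posSemidef hSpsd
  have hHerm : M.IsHermitian := hM.isHermitian
  set μ := hHerm.eigenvalues with hμ
  have hpos : ∀ i, 0 < μ i := hM.eigenvalues_pos
  have hdet : M.det = ∏ i, μ i := by
    simpa using hHerm.det_eq_prod_eigenvalues
  have htr : M.trace = ∑ i, μ i := by
    simpa using hHerm.trace_eq_sum_eigenvalues
  -- trace bound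
  have hsq : ∀ t, t < T → ∑ i, (x t i) ^ 2 ≤ C_b ^ 2 := by
    intro t ht
    have h1 := hx t ht
    have h2 : ‖(WithLp.equiv 2 (Fin d → ℝ)).symm (x t)‖ ^ 2 = ∑ i, (x t i) ^ 2 := by
      rw [EuclideanSpace.norm_eq]
      rw [Real.sq_sqrt (by positivity)]
      refine Finset.sum_congr rfl fun i _ => ?_
      rw [WithLp.equiv_symm_apply, PiLp.toLp_apply, Real.norm_eq_abs, sq_abs]
    calc ∑ i, (x t i) ^ 2 = _ := h2.symm
      _ ≤ C_b ^ 2 := pow_le_pow_left₀ (norm_nonneg _) h1 2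
  have htrval : M.trace = d + (1/lam) * ∑ t ∈ Finset.range T, ∑ i, (x t i) ^ 2 := by
    rw [hMdef, Matrix.trace_add, Matrix.trace_one, hS, Matrix.trace_smul, Matrix.trace_sum]
    simp only [smul_eq_mul, Fintype.card_fin]
    congr 1
    congr 1
    refine Finset.sum_congr rfl fun t _ => ?_
    simp [Matrix.trace, Matrix.diag, vecMulVec_apply, sq]
  have htrle : M.trace ≤ d + (1/lam) * (T * C_b ^ 2) := by
    rw [htrval]
    gcongr
    calc ∑ t ∈ Finset.range T, ∑ i, (x t i) ^ 2
        ≤ ∑ t ∈ Finset.range T, C_b ^ 2 :=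
          Finset.sum_le_sum fun t ht => hsq t (Finset.mem_range.mp ht)
      _ = T * C_b ^ 2 := by simp [mul_comm]
  -- AM-GM
  have hamgm : ∏ i, μ i ^ ((d:ℝ)⁻¹) ≤ ∑ i, (d:ℝ)⁻¹ * μ i := by
    apply Real.geom_mean_le_arith_mean_weighted
    · intro i _; positivity
    · simp [Finset.card_univ]
      field_simp
    · intro i _; exact (hpos i).le
  have havgpos : (0:ℝ) < ∑ i, (d:ℝ)⁻¹ * μ i := by
    rw [← Finset.mul_sum]
    have : 0 < ∑ i, μ i := Finset.sum_pos (fun i _ => hpos i) (by simp [Finset.univ_nonempty_iff]; exact Fin.pos_iff_nonempty.mp hd)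
    positivity
  have hlog1 : Real.log (∏ i, μ i ^ ((d:ℝ)⁻¹)) = (d:ℝ)⁻¹ * ∑ i, Real.log (μ i) := by
    rw [Real.log_prod (fun i _ => (Real.rpow_pos_of_pos (hpos i) _).ne')]
    rw [Finset.mul_sum]
    exact Finset.sum_congr rfl fun i _ => Real.log_rpow (hpos i) _
  have key : ∑ i, Real.log (μ i) ≤ (d:ℝ) * Real.log (∑ i, (d:ℝ)⁻¹ * μ i) := by
    have h1 : Real.log (∏ i, μ i ^ ((d:ℝ)⁻¹)) ≤ Real.log (∑ i, (d:ℝ)⁻¹ * μ i) :=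
      Real.log_le_log (Finset.prod_pos fun i _ => Real.rpow_pos_of_pos (hpos i) _) hamgm
    rw [hlog1] at h1
    calc ∑ i, Real.log (μ i) = (d:ℝ) * ((d:ℝ)⁻¹ * ∑ i, Real.log (μ i)) := by
          field_simp
      _ ≤ (d:ℝ) * Real.log (∑ i, (d:ℝ)⁻¹ * μ i) := by
          exact mul_le_mul_of_nonneg_left h1 hd'.le
  have hfinal : Real.log (∑ i, (d:ℝ)⁻¹ * μ i) ≤ Real.log (1 + T * C_b ^ 2 / (d * lam)) := by
    apply Real.log_le_log havgpos
    rw [← Finset.mul_sum, ← htr]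
    calc (d:ℝ)⁻¹ * M.trace ≤ (d:ℝ)⁻¹ * (d + (1/lam) * (T * C_b ^ 2)) := by
          exact mul_le_mul_of_nonneg_left htrle (by positivity)
      _ = 1 + T * C_b ^ 2 / (d * lam) := by field_simp
  have hlogdet : Real.log M.det = ∑ i, Real.log (μ i) := by
    rw [hdet, Real.log_prod (fun i _ => (hpos i).ne')]
  calc Real.log M.det = ∑ i, Real.log (μ i) := hlogdet
    _ ≤ (d:ℝ) * Real.log (∑ i, (d:ℝ)⁻¹ * μ i) := key
    _ ≤ (d:ℝ) * Real.log (1 + T * C_b ^ 2 / (d * lam)) :=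
        mul_le_mul_of_nonneg_left hfinal hd'.le
end

section
/- Let G = Σ_{s=1}^{u} x_s x_sᵀ be invertible, b ∈ ℝ^d with bᵀG^{-1}b ≤ 2d/m, and |ξ_s| ≤ ξ_max for all s, where u ≤ 2m. Then |bᵀ G^{-1} Σ_{s=1}^u x_s ξ_s| ≤ 2√d · ξ_max. -/
open Matrix

theorem misspecification_term_bound {d u m : ℕ} (hm : 0 < m) (hu : u ≤ 2 * m)
    (x : ℕ → Fin d → ℝ) (ξ : ℕ → ℝ) (ξmax : ℝ)
    (G : Matrix (Fin d) (Fin d) ℝ)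
    (hG : G = ∑ s ∈ Finset.range u, vecMulVec (x s) (x s))
    (hGinv : IsUnit G.det)
    (b : Fin d → ℝ) (hb : b ⬝ᵥ (G⁻¹ *ᵥ b) ≤ 2 * d / m)
    (hξ : ∀ s, |ξ s| ≤ ξmax) :
    |b ⬝ᵥ (G⁻¹ *ᵥ (∑ s ∈ Finset.range u, ξ s • x s))| ≤
      2 * Real.sqrt d * ξmax := by
  have hξ0 : 0 ≤ ξmax := le_trans (abs_nonneg _) (hξ 0)
  set c : Fin d → ℝ := G⁻¹ *ᵥ b with hc
  have hGsymm : Gᵀ = G := by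
    rw [hG, Matrix.transpose_sum]
    refine Finset.sum_congr rfl fun s _ => ?_
    ext i j
    simp [Matrix.vecMulVec_apply, mul_comm]
  have hsymm : ∀ v : Fin d → ℝ, b ⬝ᵥ (G⁻¹ *ᵥ v) = c ⬝ᵥ v := by
    intro v
    rw [Matrix.dotProduct_mulVec, hc, ← Matrix.mulVec_transpose,
        Matrix.transpose_nonsing_inv, hGsymm]
  have hGc : G *ᵥ c = b := by
    rw [hc, Matrix.mulVec_mulVec, Matrix.mul_nonsing_inv G hGinv, Matrix.one_mulVec]
  have hdps : ∀ (v : ℕ → Fin d → ℝ) (t : Finset ℕ),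
      c ⬝ᵥ (∑ s ∈ t, v s) = ∑ s ∈ t, c ⬝ᵥ v s := by
    intro v t
    induction t using Finset.cons_induction with
    | empty => simp
    | cons a t ha ih => rw [Finset.sum_cons, Finset.sum_cons, dotProduct_add, ih]
  have hmvs : ∀ (f : ℕ → Matrix (Fin d) (Fin d) ℝ) (t : Finset ℕ),
      (∑ s ∈ t, f s) *ᵥ c = ∑ s ∈ t, f s *ᵥ c := by
    intro f t
    induction t using Finset.cons_induction with
    | empty => simp [Matrix.zero_mulVec]
    | cons a t ha ih => rw [Finset.sum_cons, Finset.sum_cons, Matrix.add_mulVec, ih]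
  have hterm : ∀ s, c ⬝ᵥ (vecMulVec (x s) (x s) *ᵥ c) = (c ⬝ᵥ x s) ^ 2 := by
    intro s
    simp only [Matrix.mulVec, Matrix.vecMulVec_apply, dotProduct, pow_two,
      Finset.mul_sum, Finset.sum_mul]
    rw [Finset.sum_comm]
    refine Finset.sum_congr rfl fun i _ => Finset.sum_congr rfl fun j _ => by ring
  have hsum : ∑ s ∈ Finset.range u, (c ⬝ᵥ x s) ^ 2 = b ⬝ᵥ (G⁻¹ *ᵥ b) := by
    have h1 : c ⬝ᵥ (G *ᵥ c) = ∑ s ∈ Finset.range u, (c ⬝ᵥ x s) ^ 2 := by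
      rw [hG, hmvs, hdps]
      exact Finset.sum_congr rfl fun s _ => hterm s
    rw [← h1, hGc, dotProduct_comm, hc]
  have hS : (0:ℝ) ≤ ∑ s ∈ Finset.range u, (c ⬝ᵥ x s) ^ 2 :=
    Finset.sum_nonneg fun s _ => sq_nonneg _
  -- rewrite LHS
  have hLHS : b ⬝ᵥ (G⁻¹ *ᵥ (∑ s ∈ Finset.range u, ξ s • x s)) =
      ∑ s ∈ Finset.range u, ξ s * (c ⬝ᵥ x s) := by
    rw [hsymm, hdps]
    exact Finset.sum_congr rfl fun s _ => by
      rw [dotProduct_smul]; simp [smul_eq_mul]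
  rw [hLHS]
  have h2 : |∑ s ∈ Finset.range u, ξ s * (c ⬝ᵥ x s)| ≤
      ξmax * ∑ s ∈ Finset.range u, |c ⬝ᵥ x s| := by
    calc |∑ s ∈ Finset.range u, ξ s * (c ⬝ᵥ x s)|
        ≤ ∑ s ∈ Finset.range u, |ξ s * (c ⬝ᵥ x s)| := Finset.abs_sum_le_sum_abs _ _
      _ ≤ ∑ s ∈ Finset.range u, ξmax * |c ⬝ᵥ x s| := by
          refine Finset.sum_le_sum fun s _ => ?_
          rw [abs_mul]
          exact mul_le_mul_of_nonneg_right (hξ s) (abs_nonneg _)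
      _ = ξmax * ∑ s ∈ Finset.range u, |c ⬝ᵥ x s| := (Finset.mul_sum _ _ _).symm
  have h3 : (∑ s ∈ Finset.range u, |c ⬝ᵥ x s|) ^ 2 ≤
      u * ∑ s ∈ Finset.range u, (c ⬝ᵥ x s) ^ 2 := by
    have := sq_sum_le_card_mul_sum_sq (s := Finset.range u) (f := fun s => |c ⬝ᵥ x s|)
    simpa [sq_abs] using this
  have h4 : u * (∑ s ∈ Finset.range u, (c ⬝ᵥ x s) ^ 2) ≤ 4 * d := by
    have hbS : ∑ s ∈ Finset.range u, (c ⬝ᵥ x s) ^ 2 ≤ 2 * d / m := hsum ▸ hb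
    calc (u:ℝ) * ∑ s ∈ Finset.range u, (c ⬝ᵥ x s) ^ 2
        ≤ (2 * m) * (2 * d / m) := by
          apply mul_le_mul _ hbS hS (by positivity)
          exact_mod_cast hu
      _ = 4 * d := by
          field_simp
          ring
  have h5 : ∑ s ∈ Finset.range u, |c ⬝ᵥ x s| ≤ 2 * Real.sqrt d := by
    have hnn : (0:ℝ) ≤ ∑ s ∈ Finset.range u, |c ⬝ᵥ x s| :=
      Finset.sum_nonneg fun s _ => abs_nonneg _
    have : (∑ s ∈ Finset.range u, |c ⬝ᵥ x s|) ^ 2 ≤ (2 * Real.sqrt d) ^ 2 := by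
      have : (2 * Real.sqrt d) ^ 2 = 4 * d := by
        rw [mul_pow, Real.sq_sqrt (by positivity)]; norm_num
      rw [this]
      exact h3.trans h4
    calc ∑ s ∈ Finset.range u, |c ⬝ᵥ x s|
        = Real.sqrt ((∑ s ∈ Finset.range u, |c ⬝ᵥ x s|) ^ 2) := (Real.sqrt_sq hnn).symm
      _ ≤ Real.sqrt ((2 * Real.sqrt d) ^ 2) := Real.sqrt_le_sqrt this
      _ = 2 * Real.sqrt d := Real.sqrt_sq (by positivity)
  calc |∑ s ∈ Finset.range u, ξ s * (c ⬝ᵥ x s)| ≤ ξmax * ∑ s ∈ Finset.range u, |c ⬝ᵥ x s| := h2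
    _ ≤ ξmax * (2 * Real.sqrt d) := mul_le_mul_of_nonneg_left h5 hξ0
    _ = 2 * Real.sqrt d * ξmax := by ring
end

section
/- (Weak GAM preserves maximizers) Let f, f₀ : X → ℝ attain maxima f_w* and f* respectively, and suppose |f(x) - f_w* + f* - f₀(x)| ≤ ρ(f* - f₀(x)) for all x ∈ X with 0 ≤ ρ < 1. Then argmax f = argmax f₀. -/
theorem weak_gam_preserves_maximizers {X : Type*} (f f₀ : X → ℝ)
    (fwstar fstar : ℝ)
    (hfw : ∃ x, f x = fwstar ∧ ∀ y, f y ≤ fwstar)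
    (hf : ∃ x, f₀ x = fstar ∧ ∀ y, f₀ y ≤ fstar)
    (ρ : ℝ) (hρ0 : 0 ≤ ρ) (hρ1 : ρ < 1)
    (hgam : ∀ x, |f x - fwstar + fstar - f₀ x| ≤ ρ * (fstar - f₀ x)) :
    {x | ∀ y, f y ≤ f x} = {x | ∀ y, f₀ y ≤ f₀ x} := by
  obtain ⟨xw, hxw, hxwmax⟩ := hfw
  obtain ⟨x0, hx0, hx0max⟩ := hf
  have key : ∀ x, (f x = fwstar ↔ f₀ x = fstar) := by
    intro x
    have h := hgam x
    have habs := abs_le.mp h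
    have hg : 0 ≤ fstar - f₀ x := by linarith [hx0max x]
    constructor
    · intro hx
      nlinarith [habs.2, habs.1]
    · intro hx
      rw [hx] at h
      simp at h
      linarith
  ext x
  simp only [Set.mem_setOf_eq]
  constructor
  · intro hmax
    have hfx : f x = fwstar := le_antisymm (hxwmax x) (hxw ▸ hmax xw)
    have : f₀ x = fstar := (key x).mp hfx
    intro y; rw [this]; exact hx0max y
  · intro hmax
    have hf0x : f₀ x = fstar := le_antisymm (hx0max x) (hx0 ▸ hmax x0)
    have : f x = fwstar := (key x).mpr hf0x
    intro y; rw [this]; exact hxwmax y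
end

section
/- Suppose w* ∈ Ball_t := {w : ‖w - ŵ_t‖²_{Σ_t} ≤ β_t} and x_t maximizes max_{w ∈ Ball_t} wᵀx over x ∈ X while x* ∈ X. Then w*ᵀ(x* - x_t) ≤ 2√(β_t) · ‖x_t‖_{Σ_t^{-1}}. -/
open Matrix

private lemma dot_self_nn {d : ℕ} (u : Fin d → ℝ) : 0 ≤ u ⬝ᵥ u :=
  Finset.sum_nonneg fun i _ => mul_self_nonneg _

private lemma dot_cs {d : ℕ} (u v : Fin d → ℝ) :
    u ⬝ᵥ v ≤ Real.sqrt (u ⬝ᵥ u) * Real.sqrt (v ⬝ᵥ v) := by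
  have h := Finset.sum_mul_sq_le_sq_mul_sq Finset.univ u v
  have h1 : u ⬝ᵥ v ≤ |u ⬝ᵥ v| := le_abs_self _
  have h2 : |u ⬝ᵥ v| = Real.sqrt ((u ⬝ᵥ v) ^ 2) := (Real.sqrt_sq_eq_abs _).symm
  have h3 : (u ⬝ᵥ v) ^ 2 ≤ (u ⬝ᵥ u) * (v ⬝ᵥ v) := by
    simpa [dotProduct, sq, Finset.mul_sum, Finset.sum_mul] using h
  have h4 : Real.sqrt ((u ⬝ᵥ v) ^ 2) ≤ Real.sqrt ((u ⬝ᵥ u) * (v ⬝ᵥ v)) :=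
    Real.sqrt_le_sqrt h3
  calc u ⬝ᵥ v ≤ Real.sqrt ((u ⬝ᵥ v) ^ 2) := h2 ▸ h1
    _ ≤ Real.sqrt ((u ⬝ᵥ u) * (v ⬝ᵥ v)) := h4
    _ = Real.sqrt (u ⬝ᵥ u) * Real.sqrt (v ⬝ᵥ v) := Real.sqrt_mul (dot_self_nn u) _

private lemma dot_triangle {d : ℕ} (a b : Fin d → ℝ) :
    Real.sqrt ((a + b) ⬝ᵥ (a + b)) ≤ Real.sqrt (a ⬝ᵥ a) + Real.sqrt (b ⬝ᵥ b) := by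
  have hcs := dot_cs a b
  have hexp : (a + b) ⬝ᵥ (a + b) = a ⬝ᵥ a + 2 * (a ⬝ᵥ b) + b ⬝ᵥ b := by
    simp [add_dotProduct, dotProduct_add, dotProduct_comm b a]; ring
  have hsq : (a + b) ⬝ᵥ (a + b) ≤ (Real.sqrt (a ⬝ᵥ a) + Real.sqrt (b ⬝ᵥ b)) ^ 2 := by
    rw [hexp, add_sq, Real.sq_sqrt (dot_self_nn a),
      Real.sq_sqrt (dot_self_nn b)]
    nlinarith [hcs]
  calc Real.sqrt ((a + b) ⬝ᵥ (a + b))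
      ≤ Real.sqrt ((Real.sqrt (a ⬝ᵥ a) + Real.sqrt (b ⬝ᵥ b)) ^ 2) := Real.sqrt_le_sqrt hsq
    _ = Real.sqrt (a ⬝ᵥ a) + Real.sqrt (b ⬝ᵥ b) := by
        rw [Real.sqrt_sq (by positivity)]

theorem ucb_gap_bound {d : ℕ} (St : Matrix (Fin d) (Fin d) ℝ) (hS : St.PosDef)
    (β : ℝ) (hβ : 0 ≤ β) (wh ws : Fin d → ℝ)
    (X : Set (Fin d → ℝ)) (xt xs : Fin d → ℝ) (hxt : xt ∈ X) (hxs : xs ∈ X)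
    (Ball : Set (Fin d → ℝ))
    (hBall : Ball = {w | (w - wh) ⬝ᵥ (St *ᵥ (w - wh)) ≤ β})
    (hws : ws ∈ Ball)
    (wt : Fin d → ℝ) (hwt : wt ∈ Ball)
    (hopt : ∀ x ∈ X, ∀ w ∈ Ball, w ⬝ᵥ x ≤ wt ⬝ᵥ xt) :
    ws ⬝ᵥ xs - ws ⬝ᵥ xt ≤
      2 * Real.sqrt β * Real.sqrt (xt ⬝ᵥ (St⁻¹ *ᵥ xt)) := by
  classical
  set B := (open scoped MatrixOrder in CFC.sqrt St) with hBdef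
  have hBB : B * B = St := by
    open scoped MatrixOrder in exact CFC.sqrt_mul_sqrt_self St hS.posSemidef.nonneg
  have hBsym : Bᵀ = B := by
    open scoped MatrixOrder in
    have h := (CFC.sqrt_nonneg St).posSemidef.1
    rw [IsHermitian, conjTranspose_eq_transpose_of_trivial] at h
    exact h
  -- B is invertible
  have hdet : IsUnit B.det := by
    have hSd : (0:ℝ) < St.det := hS.det_pos
    have : B.det * B.det = St.det := by rw [← det_mul, hBB]
    have hBd : B.det ≠ 0 := by
      intro h; rw [h, mul_zero] at this; exact absurd this.symm (ne_of_gt hSd)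
    exact isUnit_iff_ne_zero.mpr hBd
  set C := B⁻¹ with hCdef
  have hBC : B * C = 1 := mul_nonsing_inv B hdet
  have hCsym : Cᵀ = C := by rw [hCdef, transpose_nonsing_inv, hBsym]
  have hCC : C * C = St⁻¹ := by
    rw [hCdef, ← Matrix.mul_inv_rev, hBB]
  -- key identity: (B *ᵥ u) ⬝ᵥ w = u ⬝ᵥ (B *ᵥ w) by symmetry
  have hmv : ∀ (M : Matrix (Fin d) (Fin d) ℝ), Mᵀ = M →
      ∀ u w : Fin d → ℝ, (M *ᵥ u) ⬝ᵥ w = u ⬝ᵥ (M *ᵥ w) := by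
    intro M hM u w
    rw [dotProduct_mulVec u M w, ← mulVec_transpose, hM, dotProduct_comm]
  have hBnorm : ∀ v : Fin d → ℝ, (B *ᵥ v) ⬝ᵥ (B *ᵥ v) = v ⬝ᵥ (St *ᵥ v) := by
    intro v
    rw [hmv B hBsym, mulVec_mulVec, hBB]
  have hCnorm : (C *ᵥ xt) ⬝ᵥ (C *ᵥ xt) = xt ⬝ᵥ (St⁻¹ *ᵥ xt) := by
    rw [hmv C hCsym, mulVec_mulVec, hCC]
  -- step 1: ws ⬝ xs ≤ wt ⬝ xt
  have h1 : ws ⬝ᵥ xs ≤ wt ⬝ᵥ xt := hopt xs hxs ws hws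
  -- step 2: (wt - ws) ⬝ xt ≤ ‖B(wt-ws)‖ ‖C xt‖
  have hx : xt = B *ᵥ (C *ᵥ xt) := by rw [mulVec_mulVec, hBC, one_mulVec]
  have h2 : (wt - ws) ⬝ᵥ xt ≤
      Real.sqrt ((wt - ws) ⬝ᵥ (St *ᵥ (wt - ws))) * Real.sqrt (xt ⬝ᵥ (St⁻¹ *ᵥ xt)) := by
    calc (wt - ws) ⬝ᵥ xt = (wt - ws) ⬝ᵥ (B *ᵥ (C *ᵥ xt)) := by rw [← hx]
      _ = (B *ᵥ (wt - ws)) ⬝ᵥ (C *ᵥ xt) := (hmv B hBsym _ _).symm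
      _ ≤ Real.sqrt ((B *ᵥ (wt - ws)) ⬝ᵥ (B *ᵥ (wt - ws))) *
            Real.sqrt ((C *ᵥ xt) ⬝ᵥ (C *ᵥ xt)) := dot_cs _ _
      _ = Real.sqrt ((wt - ws) ⬝ᵥ (St *ᵥ (wt - ws))) * Real.sqrt (xt ⬝ᵥ (St⁻¹ *ᵥ xt)) := by
            rw [hBnorm, hCnorm]
  -- step 3: triangle inequality
  have hwtB : (wt - wh) ⬝ᵥ (St *ᵥ (wt - wh)) ≤ β := by
    have := hwt; rw [hBall] at this; exact this
  have hwsB : (ws - wh) ⬝ᵥ (St *ᵥ (ws - wh)) ≤ β := by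
    have := hws; rw [hBall] at this; exact this
  have h3 : Real.sqrt ((wt - ws) ⬝ᵥ (St *ᵥ (wt - ws))) ≤ 2 * Real.sqrt β := by
    have hsplit : B *ᵥ (wt - ws) = B *ᵥ (wt - wh) + B *ᵥ (wh - ws) := by
      rw [← mulVec_add]; congr 1; abel
    have htri := dot_triangle (B *ᵥ (wt - wh)) (B *ᵥ (wh - ws))
    rw [← hsplit] at htri
    have e1 : Real.sqrt ((B *ᵥ (wt - ws)) ⬝ᵥ (B *ᵥ (wt - ws)))
        = Real.sqrt ((wt - ws) ⬝ᵥ (St *ᵥ (wt - ws))) := by rw [hBnorm]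
    have e2 : Real.sqrt ((B *ᵥ (wt - wh)) ⬝ᵥ (B *ᵥ (wt - wh))) ≤ Real.sqrt β := by
      rw [hBnorm]; exact Real.sqrt_le_sqrt hwtB
    have e3 : Real.sqrt ((B *ᵥ (wh - ws)) ⬝ᵥ (B *ᵥ (wh - ws))) ≤ Real.sqrt β := by
      rw [hBnorm]
      have : (wh - ws) ⬝ᵥ (St *ᵥ (wh - ws)) = (ws - wh) ⬝ᵥ (St *ᵥ (ws - wh)) := by
        have h : wh - ws = -(ws - wh) := by abel
        rw [h, mulVec_neg, neg_dotProduct, dotProduct_neg, neg_neg]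
      rw [this]; exact Real.sqrt_le_sqrt hwsB
    rw [e1] at htri
    linarith
  have hsqnn : 0 ≤ Real.sqrt (xt ⬝ᵥ (St⁻¹ *ᵥ xt)) := Real.sqrt_nonneg _
  have h4 : (wt - ws) ⬝ᵥ xt ≤ 2 * Real.sqrt β * Real.sqrt (xt ⬝ᵥ (St⁻¹ *ᵥ xt)) :=
    h2.trans (mul_le_mul_of_nonneg_right h3 hsqnn)
  have hexpand : (wt - ws) ⬝ᵥ xt = wt ⬝ᵥ xt - ws ⬝ᵥ xt := sub_dotProduct _ _ _
  linarith [h4, h1, hexpand.symm.le, hexpand.le]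
end

section
/- Let Δ₀,…,Δ_{t-1} ∈ ℝ, x₀,…,x_{t-1} ∈ ℝ^d, λ > 0, and Σ_t = λI + Σ_i x_i x_iᵀ. Then ‖Σ_{i=0}^{t-1} Δ_i x_i‖²_{Σ_t^{-1}} ≤ (Σ_{i=0}^{t-1} Δ_i²) · (Σ_{i=0}^{t-1} ‖x_i‖²_{Σ_t^{-1}}) ≤ d · Σ_{i=0}^{t-1} Δ_i². -/
open Matrix
open scoped MatrixOrder

lemma vmv_posSemidef {d : ℕ} (v : Fin d → ℝ) : (vecMulVec v v).PosSemidef := by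
  refine Matrix.PosSemidef.of_dotProduct_mulVec_nonneg ?_ ?_
  · ext i j
    simp [vecMulVec_apply, conjTranspose_apply, mul_comm]
  · intro w
    have : star w ⬝ᵥ (vecMulVec v v *ᵥ w) = (v ⬝ᵥ w) ^ 2 := by
      simp [dotProduct, mulVec, vecMulVec_apply, Finset.mul_sum, Finset.sum_mul, sq,
        Finset.sum_mul_sum]
      apply Finset.sum_congr rfl; intros; apply Finset.sum_congr rfl; intros; ring
    rw [this]
    positivity

theorem misspecified_sum_bound {d t : ℕ} (lam : ℝ) (hlam : 0 < lam)
    (x : ℕ → Fin d → ℝ) (Δ : ℕ → ℝ)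
    (St : Matrix (Fin d) (Fin d) ℝ)
    (hS : St = lam • (1 : Matrix (Fin d) (Fin d) ℝ) +
      ∑ i ∈ Finset.range t, vecMulVec (x i) (x i)) :
    (∑ i ∈ Finset.range t, Δ i • x i) ⬝ᵥ
        (St⁻¹ *ᵥ (∑ i ∈ Finset.range t, Δ i • x i)) ≤
      (∑ i ∈ Finset.range t, (Δ i) ^ 2) *
        (∑ i ∈ Finset.range t, x i ⬝ᵥ (St⁻¹ *ᵥ x i)) ∧
    (∑ i ∈ Finset.range t, (Δ i) ^ 2) *
        (∑ i ∈ Finset.range t, x i ⬝ᵥ (St⁻¹ *ᵥ x i)) ≤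
      (d : ℝ) * ∑ i ∈ Finset.range t, (Δ i) ^ 2 := by
  -- St is positive definite
  have hPD : St.PosDef := by
    rw [hS]
    refine Matrix.PosDef.add_posSemidef ?_ ?_
    · rw [smul_one_eq_diagonal]
      exact Matrix.posDef_diagonal_iff.mpr fun _ => hlam
    · refine Finset.sum_induction _ _ (fun a b ha hb => ha.add hb)
        Matrix.PosSemidef.zero (fun i _ => vmv_posSemidef (x i))
  have hinv : St⁻¹.PosDef := hPD.inv
  have hpsd := hinv.posSemidef
  set B := CFC.sqrt St⁻¹ with hBdef
  have hBB : B * B = St⁻¹ := CFC.sqrt_mul_sqrt_self _ hpsd.nonneg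
  have hBsymm : Bᵀ = B := by
    have h := (CFC.sqrt_nonneg St⁻¹).posSemidef.isHermitian
    ext i j
    simpa using congrFun (congrFun h i) j
  have key : ∀ v : Fin d → ℝ, v ⬝ᵥ (St⁻¹ *ᵥ v) = (B *ᵥ v) ⬝ᵥ (B *ᵥ v) := by
    intro v
    rw [← hBB, ← mulVec_mulVec, dotProduct_mulVec]
    congr 1
    nth_rewrite 1 [← hBsymm]
    rw [vecMul_transpose]
  set y : ℕ → Fin d → ℝ := fun i => B *ᵥ x i with hy
  have hw : B *ᵥ (∑ i ∈ Finset.range t, Δ i • x i)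
      = ∑ i ∈ Finset.range t, Δ i • y i := by
    show B.mulVecLin _ = _
    rw [map_sum]
    exact Finset.sum_congr rfl fun i _ => by simp [hy, mulVecLin_apply, mulVec_smul]
  constructor
  · rw [key, hw]
    have expand : (∑ i ∈ Finset.range t, Δ i • y i) ⬝ᵥ (∑ i ∈ Finset.range t, Δ i • y i)
        = ∑ j, (∑ i ∈ Finset.range t, Δ i * y i j) ^ 2 := by
      simp [dotProduct, sq, Finset.sum_apply]
    rw [expand]
    have cs : ∀ j : Fin d, (∑ i ∈ Finset.range t, Δ i * y i j) ^ 2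
        ≤ (∑ i ∈ Finset.range t, (Δ i) ^ 2) * ∑ i ∈ Finset.range t, (y i j) ^ 2 :=
      fun j => Finset.sum_mul_sq_le_sq_mul_sq _ _ _
    calc ∑ j, (∑ i ∈ Finset.range t, Δ i * y i j) ^ 2
        ≤ ∑ j, (∑ i ∈ Finset.range t, (Δ i) ^ 2) * ∑ i ∈ Finset.range t, (y i j) ^ 2 :=
          Finset.sum_le_sum fun j _ => cs j
      _ = (∑ i ∈ Finset.range t, (Δ i) ^ 2) *
          (∑ i ∈ Finset.range t, x i ⬝ᵥ (St⁻¹ *ᵥ x i)) := by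
          rw [← Finset.mul_sum]
          congr 1
          rw [Finset.sum_comm]
          refine Finset.sum_congr rfl fun i _ => ?_
          rw [key (x i)]
          simp [dotProduct, sq, hy]
  · -- second inequality via trace
    have tr_eq : ∀ v : Fin d → ℝ, v ⬝ᵥ (St⁻¹ *ᵥ v) = trace (St⁻¹ * vecMulVec v v) := by
      intro v
      simp only [trace, diag_apply, mul_apply, vecMulVec_apply, dotProduct, mulVec,
        Finset.mul_sum, Finset.sum_mul]
      apply Finset.sum_congr rfl; intros; apply Finset.sum_congr rfl; intros; ring
    have hdet : IsUnit St.det := hPD.det_pos.ne'.isUnit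
    have hsum : ∑ i ∈ Finset.range t, x i ⬝ᵥ (St⁻¹ *ᵥ x i)
        = (d : ℝ) - lam * trace St⁻¹ := by
      calc ∑ i ∈ Finset.range t, x i ⬝ᵥ (St⁻¹ *ᵥ x i)
          = trace (St⁻¹ * ∑ i ∈ Finset.range t, vecMulVec (x i) (x i)) := by
            rw [Finset.mul_sum, trace_sum]
            exact Finset.sum_congr rfl fun i _ => tr_eq (x i)
        _ = trace (St⁻¹ * St - lam • St⁻¹) := by
            congr 1
            have : (∑ i ∈ Finset.range t, vecMulVec (x i) (x i))
                = St - lam • (1 : Matrix (Fin d) (Fin d) ℝ) := by rw [hS]; abel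
            rw [this, Matrix.mul_sub]
            congr 1
            simp [Matrix.mul_smul, Matrix.mul_one]
        _ = (d : ℝ) - lam * trace St⁻¹ := by
            rw [Matrix.nonsing_inv_mul _ hdet, trace_sub, trace_one, trace_smul]
            simp
    have htr : 0 ≤ trace St⁻¹ := by
      rw [trace]
      refine Finset.sum_nonneg fun j _ => ?_
      have hne : Pi.single j (1:ℝ) ≠ (0 : Fin d → ℝ) := by
        intro h
        have := congrFun h j
        simp at this
      have h := hinv.dotProduct_mulVec_pos hne
      have : star (Pi.single j (1:ℝ)) ⬝ᵥ (St⁻¹ *ᵥ Pi.single j 1) = St⁻¹ j j := by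
        simp [mulVec_single, single_dotProduct]
      rw [this] at h
      exact le_of_lt h
    have hΔ : 0 ≤ ∑ i ∈ Finset.range t, (Δ i) ^ 2 :=
      Finset.sum_nonneg fun i _ => sq_nonneg _
    rw [hsum]
    nlinarith [mul_nonneg (le_of_lt hlam) htr]
end
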